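/- For complex parameters with Re c > Re b > 0 and |z| < 1, the Gauss hypergeometric function has the Euler integral representation ₂F₁(a,b;c;z) = (Γ(c)/(Γ(b)·Γ(c−b))) · ∫₀¹ s^{b−1}·(1−s)^{c−b−1}·(1−sz)^{−a} ds. -/

import Mathlib

open Set Filter Complex MeasureTheory intervalIntegral

private lemma pochEval_succ (x : ℂ) (k : ℕ) :
    (ascPochhammer ℂ (k + 1)).eval x = (ascPochhammer ℂ k).eval x * (x + k) := by
  rw [ascPochhammer_succ_right]; simp

private lemma summable_poch (a : ℂ) (j : ℕ) {r : ℝ} (h0 : 0 ≤ r) (hr : r < 1) :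
    Summable fun k : ℕ => ‖(ascPochhammer ℂ (k + j)).eval a‖ / k.factorial * r ^ k := by
  set q : ℝ := (1 + r) / 2 with hq
  have hrq : r < q := by rw [hq]; linarith
  have hq1 : q < 1 := by rw [hq]; linarith
  apply summable_of_ratio_norm_eventually_le hq1
  rw [Filter.eventually_atTop]
  refine ⟨⌈(‖a‖ + j) * r / (q - r)⌉₊, fun k hk => ?_⟩
  have hk' : (‖a‖ + j) * r / (q - r) ≤ k := (Nat.ceil_le.mp hk)
  have hk'' : (‖a‖ + j) * r ≤ (q - r) * k := by
    rw [div_le_iff₀ (by linarith)] at hk'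
    linarith [hk']
  have key : ‖a + ((k + j : ℕ) : ℂ)‖ * r ≤ q * (k + 1) := by
    have h1 : ‖a + ((k + j : ℕ) : ℂ)‖ ≤ ‖a‖ + ((k + j : ℕ) : ℝ) := by
      simpa [-Nat.cast_add] using norm_add_le a ((k + j : ℕ) : ℂ)
    push_cast at h1 ⊢
    nlinarith [norm_nonneg a, mul_le_mul_of_nonneg_right h1 h0]
  have e : k + 1 + j = (k + j) + 1 := by omega
  rw [Real.norm_of_nonneg (by positivity), Real.norm_of_nonneg (by positivity), e,
    pochEval_succ, norm_mul, Nat.factorial_succ, pow_succ]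
  have hF : (0:ℝ) < (k.factorial:ℝ) := by positivity
  set P := ‖(ascPochhammer ℂ (k + j)).eval a‖ with hP
  set A := ‖a + ((k + j : ℕ) : ℂ)‖ with hA
  have hP0 : 0 ≤ P := norm_nonneg _
  have hrk : (0:ℝ) ≤ r ^ k := pow_nonneg h0 k
  have key2 : P * (r ^ k) * (A * r) ≤ P * (r ^ k) * (q * (k + 1)) :=
    mul_le_mul_of_nonneg_left key (mul_nonneg hP0 hrk)
  push_cast
  calc P * A / ((↑k + 1) * ↑k.factorial) * (r ^ k * r)
      = P * (r ^ k) * (A * r) / (((k : ℝ) + 1) * k.factorial) := by ring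
    _ ≤ P * (r ^ k) * (q * ((k : ℝ) + 1)) / (((k : ℝ) + 1) * k.factorial) := by
        gcongr
    _ = q * (P / ↑k.factorial * r ^ k) := by field_simp

private lemma summable_binom (a : ℂ) {w : ℂ} (hw : ‖w‖ < 1) :
    Summable fun k : ℕ => (ascPochhammer ℂ k).eval a / k.factorial * w ^ k := by
  apply Summable.of_norm
  have := summable_poch a 0 (norm_nonneg w) hw
  simp only [add_zero] at this
  refine this.congr fun k => ?_
  rw [norm_mul, norm_div, norm_pow, Complex.norm_natCast]

private lemma hasSum_binomial (a : ℂ) {w : ℂ} (hw : ‖w‖ < 1) :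
    HasSum (fun k : ℕ => (ascPochhammer ℂ k).eval a / k.factorial * w ^ k)
      ((1 - w) ^ (-a)) := by
  classical
  set c : ℕ → ℂ := fun k => (ascPochhammer ℂ k).eval a / k.factorial with hc
  set h : ℂ → ℂ := fun y => ∑' k, c k * y ^ k with hh
  set r : ℝ := (‖w‖ + 1) / 2 with hr
  have hwr : ‖w‖ < r := by rw [hr]; linarith
  have hr1 : r < 1 := by rw [hr]; linarith
  have hr0 : 0 < r := lt_of_le_of_lt (norm_nonneg w) hwr
  set t : Set ℂ := Metric.ball (0 : ℂ) r with ht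
  have hto : IsOpen t := Metric.isOpen_ball
  have htc : Convex ℝ t := convex_ball 0 r
  have hmem : ∀ y ∈ t, ‖y‖ < r := by
    intro y hy; simpa [ht, Metric.mem_ball, dist_eq_norm] using hy
  -- summable bound for derivatives
  set u : ℕ → ℝ := fun k => ‖(ascPochhammer ℂ (k + 1)).eval a‖ / k.factorial * r ^ k with hu
  have hu_sum : Summable u := summable_poch a 1 hr0.le hr1
  set g : ℕ → ℂ → ℂ := fun k y => c k * y ^ k with hg
  set g' : ℕ → ℂ → ℂ := fun k y => c k * (k * y ^ (k - 1)) with hg'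
  have hgd : ∀ k y, HasDerivAt (g k) (g' k y) y := fun k y =>
    (hasDerivAt_pow k y).const_mul (c k)
  -- key: (k+1) * c (k+1) = (a + k) * c k
  have hcs : ∀ k : ℕ, ((k : ℂ) + 1) * c (k + 1) = (a + k) * c k := by
    intro k
    rw [hc]
    simp only [pochEval_succ, Nat.factorial_succ, Nat.cast_mul]
    have hkf : ((k.factorial : ℂ)) ≠ 0 := Nat.cast_ne_zero.mpr k.factorial_ne_zero
    have hk1 : ((k : ℂ) + 1) ≠ 0 := by
      have := Nat.cast_ne_zero (R := ℂ).mpr (Nat.succ_ne_zero k)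
      push_cast at this; exact this
    push_cast
    field_simp
  -- summable bound sequence
  set v : ℕ → ℝ := fun k => if k = 0 then 0 else u (k - 1) with hv
  have hv_sum : Summable v := by
    rw [← summable_nat_add_iff 1]
    simpa [hv] using hu_sum
  have hbound : ∀ k (y : ℂ), y ∈ t → ‖g' k y‖ ≤ v k := by
    intro k y hy
    cases k with
    | zero => simp [hg', hv]
    | succ n =>
      have hyr := (hmem y hy).le
      have h1 : ‖g' (n + 1) y‖ = ‖(ascPochhammer ℂ (n + 1)).eval a‖ / n.factorial * ‖y‖ ^ n := by
        simp only [hg', hc, Nat.add_sub_cancel]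
        rw [norm_mul, norm_mul, norm_div, norm_pow, Complex.norm_natCast,
          Complex.norm_natCast, Nat.factorial_succ, Nat.cast_mul]
        push_cast
        have : ((n : ℝ) + 1) ≠ 0 := by positivity
        field_simp
      rw [h1]
      have : v (n + 1) = ‖(ascPochhammer ℂ (n + 1)).eval a‖ / n.factorial * r ^ n := by
        simp [hv, hu]
      rw [this]
      gcongr
  -- derivative of h on t
  have hD : ∀ y ∈ t, HasDerivAt h (∑' k, g' k y) y := by
    intro y hy
    exact hasDerivAt_tsum_of_isPreconnected hv_sum hto htc.isPreconnected
      (fun k y _ => hgd k y) hbound (Metric.mem_ball_self hr0)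
      (by simpa [hg] using summable_binom a (by simp : ‖(0 : ℂ)‖ < 1)) hy
  set D : ℂ → ℂ := fun y => ∑' k, g' k y with hDdef
  -- the functional equation (1 - y) * D y = a * h y
  have hkey : ∀ y ∈ t, (1 - y) * D y = a * h y := by
    intro y hy
    have hy1 : ‖y‖ < 1 := lt_trans (hmem y hy) hr1
    have S1 : Summable fun k => g' k y :=
      Summable.of_norm (hv_sum.of_nonneg_of_le (fun k => norm_nonneg _)
        (fun k => hbound k y hy))
    have H : HasSum (fun k => g' k y) (D y) := S1.hasSum
    have H1 : HasSum (fun k => g' (k + 1) y) (D y) := by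
      refine (hasSum_nat_add_iff (f := fun k => g' k y) 1).mpr ?_
      simpa [hg', hc] using H
    have e1 : (fun k => g' (k + 1) y) = fun k : ℕ => (a + (k : ℂ)) * (c k * y ^ k) := by
      funext k
      have : g' (k + 1) y = ((k : ℂ) + 1) * c (k + 1) * y ^ k := by
        simp only [hg', Nat.add_sub_cancel]
        push_cast
        ring
      rw [this, hcs k]
      ring
    rw [e1] at H1
    have H3 : HasSum (fun k => g' k y * y) (D y * y) := H.mul_right y
    have e3 : (fun k => g' k y * y) = fun k : ℕ => (k : ℂ) * (c k * y ^ k) := by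
      funext k
      cases k with
      | zero => simp [hg']
      | succ n =>
        simp only [hg', Nat.add_sub_cancel]
        push_cast
        ring
    rw [e3] at H3
    have H2 : HasSum (fun k => c k * y ^ k) (h y) := (summable_binom a hy1).hasSum
    have H4 := H1.sub H3
    have e4 : (fun k : ℕ => (a + (k : ℂ)) * (c k * y ^ k) - (k : ℂ) * (c k * y ^ k))
        = fun k : ℕ => a * (c k * y ^ k) := by funext k; ring
    rw [e4] at H4
    have := H4.unique (H2.mul_left a)
    linear_combination this
  -- φ := h * (1 - ·)^a is constant on t
  set φ : ℂ → ℂ := fun y => h y * (1 - y) ^ a with hφ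
  have hyre : ∀ y : ℂ, y ∈ t → 0 < (1 - y).re := by
    intro y hy
    have hy1 : ‖y‖ < 1 := lt_trans (hmem y hy) hr1
    have h2 : |y.re| < 1 :=
      lt_of_le_of_lt (Complex.abs_re_le_norm y) hy1
    have := (abs_lt.mp h2).2
    simp only [Complex.sub_re, Complex.one_re]
    linarith
  have hne : ∀ y : ℂ, y ∈ t → (1 : ℂ) - y ≠ 0 := by
    intro y hy h0
    have := hyre y hy
    rw [h0] at this
    simp at this
  have hslit : ∀ y ∈ t, (1 - y) ∈ Complex.slitPlane := fun y hy => Or.inl (hyre y hy)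
  have hφd : ∀ y ∈ t, HasDerivAt φ 0 y := by
    intro y hy
    have hpow : HasDerivAt (fun y : ℂ => (1 - y) ^ a) (a * (1 - y) ^ (a - 1) * (-1)) y :=
      HasDerivAt.cpow_const ((hasDerivAt_id y).const_sub 1) (hslit y hy)
    have := (hD y hy).mul hpow
    refine this.congr_deriv ?_
    symm
    have hDy : (∑' k, g' k y) = D y := rfl
    have hsub : (1 - y) ^ (a - 1) = (1 - y) ^ a * (1 - y)⁻¹ := by
      rw [Complex.cpow_sub _ _ (hne y hy), Complex.cpow_one, div_eq_mul_inv]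
    rw [hDy, hsub]
    have hk := hkey y hy
    have hinv : (1 - y) * (1 - y)⁻¹ = 1 := mul_inv_cancel₀ (hne y hy)
    linear_combination (-((1 - y) ^ a * (1 - y)⁻¹)) * hk + (D y * (1 - y) ^ a) * hinv
  -- φ is constant on t
  have hconst : φ w = φ 0 := by
    refine htc.is_const_of_fderivWithin_eq_zero (𝕜 := ℂ) (f := φ) (fun y hy => ?_) (fun y hy => ?_) ?_ ?_
    · exact ((hφd y hy).differentiableAt.differentiableWithinAt)
    · rw [fderivWithin_of_isOpen hto hy, (hφd y hy).hasFDerivAt.fderiv]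
      ext x
      simp
    · simpa [ht, Metric.mem_ball, dist_eq_norm] using hwr
    · exact Metric.mem_ball_self hr0
  have hφ0 : φ 0 = 1 := by
    have h0 : h 0 = 1 := by
      have e : h 0 = ∑' k : ℕ, c k * (0 : ℂ) ^ k := rfl
      rw [e, tsum_eq_single 0 (fun k hk => by simp [zero_pow hk])]
      simp [hc]
    have e2 : φ 0 = h 0 * (1 - 0) ^ a := rfl
    rw [e2, h0, one_mul, sub_zero, Complex.one_cpow]
  have hmul : h w * (1 - w) ^ a = 1 := by
    have e : h w * (1 - w) ^ a = φ w := rfl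
    rw [e, hconst, hφ0]
  have hres : h w = (1 - w) ^ (-a) := by
    rw [Complex.cpow_neg]
    exact eq_inv_of_mul_eq_one_right (by linear_combination hmul)
  have := (summable_binom a hw).hasSum
  have hhw : (∑' k : ℕ, c k * w ^ k) = h w := rfl
  rw [hhw, hres] at this
  exact this

private lemma Gamma_add_nat (x : ℂ) (hx : ∀ j : ℕ, x + j ≠ 0) (k : ℕ) :
    Complex.Gamma (x + k) = (ascPochhammer ℂ k).eval x * Complex.Gamma x := by
  induction k with
  | zero => simp
  | succ n ih =>
    have e : x + ((n + 1 : ℕ) : ℂ) = (x + n) + 1 := by push_cast; ring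
    rw [e, Complex.Gamma_add_one _ (hx n), ih, pochEval_succ]
    ring

/-- The Gauss hypergeometric series `₂F₁(a, b; c; z)`. -/
noncomputable def hyp2F1 (a b c z : ℂ) : ℂ :=
  ∑' k : ℕ,
    ((ascPochhammer ℂ k).eval a * (ascPochhammer ℂ k).eval b
      / ((ascPochhammer ℂ k).eval c * (k.factorial : ℂ))) * z ^ k

theorem euler_integral_representation (a b c z : ℂ)
    (hc : ∀ m : ℕ, c ≠ -(m : ℂ)) (hb : 0 < b.re) (hcb : b.re < c.re) (hz : ‖z‖ < 1) :
    hyp2F1 a b c z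
      = Complex.Gamma c / (Complex.Gamma b * Complex.Gamma (c - b))
          * ∫ s in (0 : ℝ)..1,
              (s : ℂ) ^ (b - 1) * ((1 : ℂ) - (s : ℂ)) ^ (c - b - 1)
                * ((1 : ℂ) - (s : ℂ) * z) ^ (-a) := by
  unfold hyp2F1

  have hcb' : 0 < (c - b).re := by
    rw [Complex.sub_re]; linarith
  -- nonvanishing of Gammas
  have hb_ne : ∀ m : ℕ, b ≠ -m := by
    intro m hbb
    rw [hbb] at hb
    simp only [Complex.neg_re, Complex.natCast_re] at hb
    have : (0:ℝ) ≤ m := Nat.cast_nonneg m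
    linarith
  have hcb_ne : ∀ m : ℕ, c - b ≠ -m := by
    intro m hbb
    rw [hbb] at hcb'
    simp only [Complex.neg_re, Complex.natCast_re] at hcb'
    have : (0:ℝ) ≤ m := Nat.cast_nonneg m
    linarith
  have hGb : Complex.Gamma b ≠ 0 := Complex.Gamma_ne_zero hb_ne
  have hGcb : Complex.Gamma (c - b) ≠ 0 := Complex.Gamma_ne_zero hcb_ne
  have hGc : Complex.Gamma c ≠ 0 := Complex.Gamma_ne_zero hc
  have hck : ∀ j : ℕ, c + j ≠ 0 := by
    intro j h0
    exact hc j (by linear_combination h0)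
  have hbk : ∀ j : ℕ, b + j ≠ 0 := by
    intro j h0
    exact hb_ne j (by linear_combination h0)
  have hGck : ∀ k : ℕ, Complex.Gamma (c + k) ≠ 0 := by
    intro k
    apply Complex.Gamma_ne_zero
    intro m h0
    exact hc (m + k) (by push_cast; linear_combination h0)
  -- Pochhammer of c nonzero
  have hpc : ∀ k : ℕ, (ascPochhammer ℂ k).eval c ≠ 0 := by
    intro k hk0
    exact hGck k (by rw [Gamma_add_nat c hck k, hk0, zero_mul])
  -- the terms of the expansion
  set co : ℕ → ℂ := fun k => (ascPochhammer ℂ k).eval a / k.factorial with hco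
  set F : ℕ → ℝ → ℂ := fun k s =>
    (s : ℂ) ^ (b + k - 1) * ((1 : ℂ) - (s : ℂ)) ^ (c - b - 1) * (co k * z ^ k) with hF
  set G : ℝ → ℂ := fun s => (s : ℂ) ^ (b - 1) * ((1 : ℂ) - (s : ℂ)) ^ (c - b - 1) with hG
  -- integrability of each term
  have hFint : ∀ k : ℕ, IntegrableOn (F k) (Ioc (0:ℝ) 1) volume := by
    intro k
    have h1 : 0 < (b + k).re := by
      rw [Complex.add_re, Complex.natCast_re]
      have : (0:ℝ) ≤ k := Nat.cast_nonneg k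
      linarith
    have h2 := Complex.betaIntegral_convergent h1 hcb'
    rw [intervalIntegrable_iff_integrableOn_Ioc_of_le zero_le_one] at h2
    exact h2.mul_const _
  have hGint : IntegrableOn G (Ioc (0:ℝ) 1) volume := by
    have h2 := Complex.betaIntegral_convergent (u := b) (v := c - b) hb hcb'
    rw [intervalIntegrable_iff_integrableOn_Ioc_of_le zero_le_one] at h2
    exact h2
  -- pointwise norm bound on Ioc 0 1
  have hFbound : ∀ k : ℕ, ∀ s ∈ Ioc (0:ℝ) 1, ‖F k s‖ ≤ ‖G s‖ * (‖co k * z ^ k‖) := by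
    intro k s hs
    obtain ⟨hs0, hs1⟩ := hs
    have e1 : ‖F k s‖ = ‖(s : ℂ) ^ (b + k - 1)‖ * ‖((1:ℂ) - s) ^ (c - b - 1)‖
        * ‖co k * z ^ k‖ := by
      rw [hF]; simp [norm_mul]
    have e2 : ‖G s‖ = ‖(s : ℂ) ^ (b - 1)‖ * ‖((1:ℂ) - s) ^ (c - b - 1)‖ := by
      rw [hG]; simp [norm_mul]
    rw [e1, e2]
    have k1 : ‖(s : ℂ) ^ (b + k - 1)‖ ≤ ‖(s : ℂ) ^ (b - 1)‖ := by
      rw [Complex.norm_cpow_eq_rpow_re_of_pos hs0, Complex.norm_cpow_eq_rpow_re_of_pos hs0]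
      have e3 : (b + k - 1).re = (b - 1).re + k := by
        simp [Complex.add_re, Complex.sub_re, Complex.natCast_re]; ring
      rw [e3, Real.rpow_add hs0, Real.rpow_natCast]
      have : s ^ k ≤ 1 := pow_le_one₀ hs0.le hs1
      nlinarith [Real.rpow_nonneg hs0.le (b-1).re, pow_nonneg hs0.le k]
    have := mul_le_mul_of_nonneg_right k1 (norm_nonneg (((1:ℂ) - s) ^ (c - b - 1)))
    nlinarith [norm_nonneg (co k * z ^ k), this,
      mul_nonneg (norm_nonneg ((s:ℂ) ^ (b + k - 1))) (norm_nonneg (((1:ℂ) - s) ^ (c - b - 1)))]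
  -- summability of integrals of norms
  have hsum_int : Summable fun k : ℕ => ∫ s in Ioc (0:ℝ) 1, ‖F k s‖ := by
    set B : ℝ := ∫ s in Ioc (0:ℝ) 1, ‖G s‖ with hB
    have hmaj : Summable fun k : ℕ => ‖co k * z ^ k‖ * B := by
      apply Summable.mul_right
      have := summable_poch a 0 (norm_nonneg z) hz
      simp only [add_zero] at this
      refine this.congr fun k => ?_
      rw [hco, norm_mul, norm_div, norm_pow, Complex.norm_natCast]
    refine Summable.of_nonneg_of_le (fun k => ?_) (fun k => ?_) hmaj
    · exact integral_nonneg fun s => norm_nonneg _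
    · calc ∫ s in Ioc (0:ℝ) 1, ‖F k s‖
          ≤ ∫ s in Ioc (0:ℝ) 1, ‖G s‖ * ‖co k * z ^ k‖ := by
            refine setIntegral_mono_on (hFint k).norm (hGint.norm.mul_const _)
              measurableSet_Ioc ?_
            exact fun s hs => hFbound k s hs
        _ = ‖co k * z ^ k‖ * B := by
            rw [hB, MeasureTheory.integral_mul_const, mul_comm]
  -- exchange sum and integral
  have hswap : (∑' k : ℕ, ∫ s in Ioc (0:ℝ) 1, F k s)
      = ∫ s in Ioc (0:ℝ) 1, ∑' k : ℕ, F k s :=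
    MeasureTheory.integral_tsum_of_summable_integral_norm hFint hsum_int
  -- pointwise: the integrand equals the series
  have hpt : ∀ s ∈ Ioc (0:ℝ) 1,
      (s : ℂ) ^ (b - 1) * ((1 : ℂ) - (s : ℂ)) ^ (c - b - 1)
        * ((1 : ℂ) - (s : ℂ) * z) ^ (-a) = ∑' k : ℕ, F k s := by
    intro s hs
    obtain ⟨hs0, hs1⟩ := hs
    have hsz : ‖(s : ℂ) * z‖ < 1 := by
      rw [norm_mul, Complex.norm_real, Real.norm_of_nonneg hs0.le]
      calc s * ‖z‖ ≤ 1 * ‖z‖ := by nlinarith [norm_nonneg z]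
        _ < 1 := by rwa [one_mul]
    have hbin := hasSum_binomial a hsz
    have H2 := hbin.mul_left ((s : ℂ) ^ (b - 1) * ((1 : ℂ) - (s : ℂ)) ^ (c - b - 1))
    have e : (fun k : ℕ => (s : ℂ) ^ (b - 1) * ((1 : ℂ) - (s : ℂ)) ^ (c - b - 1)
        * ((ascPochhammer ℂ k).eval a / k.factorial * ((s : ℂ) * z) ^ k))
        = fun k : ℕ => F k s := by
      funext k
      simp only [hF, hco]
      have hs0' : (s : ℂ) ≠ 0 := by
        exact_mod_cast ne_of_gt (by exact_mod_cast hs0 : (0:ℝ) < s)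
      have e2 : (s : ℂ) ^ (b + k - 1) = (s : ℂ) ^ (b - 1) * (s : ℂ) ^ (k : ℕ) := by
        rw [← Complex.cpow_natCast, ← Complex.cpow_add _ _ hs0']
        ring_nf
      rw [e2, mul_pow]
      ring
    rw [e] at H2
    exact H2.tsum_eq.symm
  -- each term integral is a Beta integral
  have hterm : ∀ k : ℕ, (∫ s in Ioc (0:ℝ) 1, F k s)
      = Complex.betaIntegral (b + k) (c - b) * (co k * z ^ k) := by
    intro k
    rw [← intervalIntegral.integral_of_le zero_le_one, Complex.betaIntegral,
      ← intervalIntegral.integral_mul_const]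
  -- value of the Beta integral
  have hbeta : ∀ k : ℕ, Complex.betaIntegral (b + k) (c - b)
      = Complex.Gamma (b + k) * Complex.Gamma (c - b) / Complex.Gamma (c + k) := by
    intro k
    have h1 : 0 < (b + (k:ℂ)).re := by
      rw [Complex.add_re, Complex.natCast_re]
      have : (0:ℝ) ≤ k := Nat.cast_nonneg k
      linarith
    have h2 := Complex.Gamma_mul_Gamma_eq_betaIntegral h1 hcb'
    have e : b + (k:ℂ) + (c - b) = c + k := by ring
    rw [e] at h2
    rw [h2]
    field_simp [hGck k]
  -- assemble
  rw [intervalIntegral.integral_of_le zero_le_one,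
    MeasureTheory.setIntegral_congr_fun measurableSet_Ioc hpt, ← hswap, ← tsum_mul_left]
  apply tsum_congr
  intro k
  rw [hterm k, hbeta k, Gamma_add_nat b hbk k, Gamma_add_nat c hck k, hco]
  have hkf : ((k.factorial : ℂ)) ≠ 0 := Nat.cast_ne_zero.mpr k.factorial_ne_zero
  field_simp [hpc k]
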